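/- There exists a Banach limit L on ℓ∞ which is invariant under the Cesàro operator, i.e. L(C x) = L(x) for all x ∈ ℓ∞, where (C x)ₙ = (1/n) Σᵢ₌₁ⁿ xᵢ. -/

import Mathlib

noncomputable section
open scoped ENNReal

/-- `ℓ∞`: the Banach space of bounded real sequences with the sup norm. -/
abbrev Linf : Type := lp (fun _ : ℕ => ℝ) ∞

/-- The left shift `(x₁,x₂,x₃,…) ↦ (x₂,x₃,x₄,…)` on `ℓ∞`. -/
def shiftSeq (x : Linf) : Linf :=
  ⟨fun n => x (n + 1), memℓp_infty ⟨‖x‖, by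
    rintro r ⟨n, rfl⟩
    exact lp.norm_apply_le_norm ENNReal.top_ne_zero x (n + 1)⟩⟩

/-- The constant sequence `e = (1,1,1,…)` in `ℓ∞`. -/
def onesSeq : Linf :=
  ⟨fun _ => 1, memℓp_infty ⟨1, by rintro r ⟨n, rfl⟩; simp⟩⟩

/-- A Banach limit: a positive, shift-invariant continuous linear functional `L` on `ℓ∞`
with `L(1,1,1,…) = 1`. -/
def IsBanachLimit (L : StrongDual ℝ Linf) : Prop :=
  (∀ x : Linf, (∀ n, 0 ≤ x n) → 0 ≤ L x) ∧
  (∀ x : Linf, L (shiftSeq x) = L x) ∧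
  L onesSeq = 1

/-- The Cesàro operator on `ℓ∞`: `(Cx)ₙ` is the average of the first `n` entries of `x`
(indices being `0`-based, the `n`-th entry of `Cx` is the average of `x₀,…,xₙ`). -/
def cesaro (x : Linf) : Linf :=
  ⟨fun n => (∑ i ∈ Finset.range (n + 1), x i) / (n + 1), memℓp_infty ⟨‖x‖, by
    rintro r ⟨n, rfl⟩
    have hpos : (0:ℝ) < (n:ℝ) + 1 := by positivity
    have h1 : ‖∑ i ∈ Finset.range (n + 1), x i‖ ≤ ((n:ℝ) + 1) * ‖x‖ := by
      calc ‖∑ i ∈ Finset.range (n + 1), x i‖ ≤ ∑ i ∈ Finset.range (n + 1), ‖x i‖ :=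
            norm_sum_le _ _
        _ ≤ ∑ _i ∈ Finset.range (n + 1), ‖x‖ :=
            Finset.sum_le_sum fun i _ => lp.norm_apply_le_norm ENNReal.top_ne_zero x i
        _ = ((n:ℝ) + 1) * ‖x‖ := by
            rw [Finset.sum_const, Finset.card_range, nsmul_eq_mul]
            push_cast; ring
    show ‖(∑ i ∈ Finset.range (n + 1), x i) / ((n:ℝ) + 1)‖ ≤ ‖x‖
    have : ‖(∑ i ∈ Finset.range (n + 1), x i) / ((n:ℝ) + 1)‖
        = ‖∑ i ∈ Finset.range (n + 1), x i‖ / ((n:ℝ) + 1) := by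
      rw [norm_div, Real.norm_eq_abs ((n:ℝ)+1), abs_of_pos hpos]
    rw [this, div_le_iff₀ hpos]
    linarith [h1]⟩⟩

namespace CB

open Filter Finset Function Topology

/-! ### Ultrafilter limits of bounded sequences -/

/-- Limit along the hyperfilter (a fixed nonprincipal ultrafilter on `ℕ`). -/
noncomputable def ulim (u : ℕ → ℝ) : ℝ :=
  limUnder ((Filter.hyperfilter ℕ : Ultrafilter ℕ) : Filter ℕ) u

lemma exists_tendsto_uf {u : ℕ → ℝ} {M : ℝ} (h : ∀ n, |u n| ≤ M) :
    ∃ a, Tendsto u ((Filter.hyperfilter ℕ : Ultrafilter ℕ) : Filter ℕ) (𝓝 a) := by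
  obtain ⟨a, -, ha⟩ := (isCompact_Icc (a := -M) (b := M)).ultrafilter_le_nhds
    ((Filter.hyperfilter ℕ).map u) (by
      rw [Ultrafilter.coe_map, Filter.le_principal_iff, Filter.mem_map]
      exact Filter.univ_mem' fun n => Set.mem_Icc.2 (abs_le.1 (h n)))
  exact ⟨a, by rwa [Ultrafilter.coe_map] at ha⟩

lemma tendsto_ulim {u : ℕ → ℝ} {M : ℝ} (h : ∀ n, |u n| ≤ M) :
    Tendsto u ((Filter.hyperfilter ℕ : Ultrafilter ℕ) : Filter ℕ) (𝓝 (ulim u)) :=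
  tendsto_nhds_limUnder (exists_tendsto_uf h)

lemma ulim_eq {u : ℕ → ℝ} {a : ℝ}
    (h : Tendsto u ((Filter.hyperfilter ℕ : Ultrafilter ℕ) : Filter ℕ) (𝓝 a)) :
    ulim u = a := h.limUnder_eq

lemma ulim_eq_of_atTop {u : ℕ → ℝ} {a : ℝ} (h : Tendsto u atTop (𝓝 a)) :
    ulim u = a := (h.mono_left Nat.hyperfilter_le_atTop).limUnder_eq

lemma ulim_abs_le {u : ℕ → ℝ} {M : ℝ} (h : ∀ n, |u n| ≤ M) : |ulim u| ≤ M :=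
  le_of_tendsto (tendsto_ulim h).abs (Filter.Eventually.of_forall h)

lemma ulim_nonneg {u : ℕ → ℝ} {M : ℝ} (h : ∀ n, |u n| ≤ M) (h0 : ∀ n, 0 ≤ u n) :
    0 ≤ ulim u := ge_of_tendsto (tendsto_ulim h) (Filter.Eventually.of_forall h0)

/-! ### Basic facts about `cesaro` -/

lemma cesaro_apply (x : Linf) (n : ℕ) :
    cesaro x n = (∑ i ∈ Finset.range (n + 1), x i) / ((n : ℝ) + 1) := rfl

lemma shiftSeq_apply (x : Linf) (n : ℕ) : shiftSeq x n = x (n + 1) := rfl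

lemma onesSeq_apply (n : ℕ) : onesSeq n = 1 := rfl

lemma entry_abs_le (x : Linf) (n : ℕ) : |x n| ≤ ‖x‖ := by
  rw [← Real.norm_eq_abs]
  exact lp.norm_apply_le_norm ENNReal.top_ne_zero x n

lemma cesaro_apply_abs_le (x : Linf) (n : ℕ) : |cesaro x n| ≤ ‖x‖ := by
  have hpos : (0:ℝ) < (n : ℝ) + 1 := by positivity
  have h1 : |∑ i ∈ Finset.range (n + 1), x i| ≤ ((n : ℝ) + 1) * ‖x‖ := by
    calc |∑ i ∈ Finset.range (n + 1), x i| ≤ ∑ i ∈ Finset.range (n + 1), |x i| :=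
          Finset.abs_sum_le_sum_abs _ _
      _ ≤ ∑ _i ∈ Finset.range (n + 1), ‖x‖ :=
          Finset.sum_le_sum fun i _ => entry_abs_le x i
      _ = ((n : ℝ) + 1) * ‖x‖ := by
          rw [Finset.sum_const, Finset.card_range, nsmul_eq_mul]; push_cast; ring
  rw [cesaro_apply, abs_div, abs_of_pos hpos, div_le_iff₀ hpos]
  calc |∑ i ∈ Finset.range (n + 1), x i| ≤ ((n : ℝ) + 1) * ‖x‖ := h1
    _ = ‖x‖ * ((n : ℝ) + 1) := by ring

lemma norm_cesaro_le (x : Linf) : ‖cesaro x‖ ≤ ‖x‖ :=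
  lp.norm_le_of_forall_le (norm_nonneg x) fun n => by
    rw [Real.norm_eq_abs]; exact cesaro_apply_abs_le x n

lemma norm_iter_le (x : Linf) (j : ℕ) : ‖cesaro^[j] x‖ ≤ ‖x‖ := by
  induction j generalizing x with
  | zero => rw [Function.iterate_zero_apply]
  | succ j ih =>
      rw [Function.iterate_succ_apply]
      exact (ih (cesaro x)).trans (norm_cesaro_le x)

lemma iter_abs_le (x : Linf) (j n : ℕ) : |(cesaro^[j] x) n| ≤ ‖x‖ :=
  (entry_abs_le _ n).trans (norm_iter_le x j)

lemma cesaro_add (x y : Linf) : cesaro (x + y) = cesaro x + cesaro y := by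
  apply lp.ext; funext n
  show cesaro (x + y) n = (cesaro x + cesaro y) n
  rw [lp.coeFn_add, Pi.add_apply, cesaro_apply, cesaro_apply, cesaro_apply]
  rw [show ∑ i ∈ Finset.range (n + 1), (x + y) i
      = ∑ i ∈ Finset.range (n + 1), (x i + y i) from
    Finset.sum_congr rfl fun i _ => by rw [lp.coeFn_add]; rfl]
  rw [Finset.sum_add_distrib, add_div]

lemma cesaro_smul (c : ℝ) (x : Linf) : cesaro (c • x) = c • cesaro x := by
  apply lp.ext; funext n
  show cesaro (c • x) n = (c • cesaro x) n
  rw [lp.coeFn_smul, Pi.smul_apply, smul_eq_mul, cesaro_apply, cesaro_apply]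
  rw [show ∑ i ∈ Finset.range (n + 1), (c • x) i
      = ∑ i ∈ Finset.range (n + 1), c * x i from
    Finset.sum_congr rfl fun i _ => by rw [lp.coeFn_smul]; rfl]
  rw [← Finset.mul_sum, mul_div_assoc]

lemma cesaro_sub (x y : Linf) : cesaro (x - y) = cesaro x - cesaro y := by
  have : x - y = x + (-1 : ℝ) • y := by rw [neg_one_smul]; abel
  rw [this, cesaro_add, cesaro_smul, neg_one_smul]; abel

lemma iter_add (j : ℕ) (x y : Linf) :
    cesaro^[j] (x + y) = cesaro^[j] x + cesaro^[j] y := by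
  induction j generalizing x y with
  | zero => simp
  | succ j ih => simp only [Function.iterate_succ_apply, cesaro_add, ih]

lemma iter_smul (j : ℕ) (c : ℝ) (x : Linf) :
    cesaro^[j] (c • x) = c • cesaro^[j] x := by
  induction j generalizing x with
  | zero => simp
  | succ j ih => simp only [Function.iterate_succ_apply, cesaro_smul, ih]

lemma iter_sub (j : ℕ) (x y : Linf) :
    cesaro^[j] (x - y) = cesaro^[j] x - cesaro^[j] y := by
  induction j generalizing x y with
  | zero => simp
  | succ j ih => simp only [Function.iterate_succ_apply, cesaro_sub, ih]

/-! ### The averaged iterates and the functional -/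

/-- `T x k n = (1/(k+1)) ∑_{j ≤ k} (Cʲ x)ₙ`. -/
noncomputable def T (x : Linf) (k n : ℕ) : ℝ :=
  (∑ j ∈ Finset.range (k + 1), (cesaro^[j] x) n) / ((k : ℝ) + 1)

lemma T_abs_le (x : Linf) (k n : ℕ) : |T x k n| ≤ ‖x‖ := by
  have hpos : (0:ℝ) < (k : ℝ) + 1 := by positivity
  have h1 : |∑ j ∈ Finset.range (k + 1), (cesaro^[j] x) n| ≤ ((k : ℝ) + 1) * ‖x‖ := by
    calc |∑ j ∈ Finset.range (k + 1), (cesaro^[j] x) n|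
        ≤ ∑ j ∈ Finset.range (k + 1), |(cesaro^[j] x) n| := Finset.abs_sum_le_sum_abs _ _
      _ ≤ ∑ _j ∈ Finset.range (k + 1), ‖x‖ := Finset.sum_le_sum fun j _ => iter_abs_le x j n
      _ = ((k : ℝ) + 1) * ‖x‖ := by
          rw [Finset.sum_const, Finset.card_range, nsmul_eq_mul]; push_cast; ring
  rw [T, abs_div, abs_of_pos hpos, div_le_iff₀ hpos]
  calc |∑ j ∈ Finset.range (k + 1), (cesaro^[j] x) n| ≤ ((k : ℝ) + 1) * ‖x‖ := h1
    _ = ‖x‖ * ((k : ℝ) + 1) := by ring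

lemma T_add (x y : Linf) (k n : ℕ) : T (x + y) k n = T x k n + T y k n := by
  unfold T
  rw [show ∑ j ∈ Finset.range (k + 1), (cesaro^[j] (x + y)) n
      = ∑ j ∈ Finset.range (k + 1), ((cesaro^[j] x) n + (cesaro^[j] y) n) from
    Finset.sum_congr rfl fun j _ => by rw [iter_add, lp.coeFn_add]; rfl]
  rw [Finset.sum_add_distrib, add_div]

lemma T_smul (c : ℝ) (x : Linf) (k n : ℕ) : T (c • x) k n = c * T x k n := by
  unfold T
  rw [show ∑ j ∈ Finset.range (k + 1), (cesaro^[j] (c • x)) n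
      = ∑ j ∈ Finset.range (k + 1), c * (cesaro^[j] x) n from
    Finset.sum_congr rfl fun j _ => by rw [iter_smul, lp.coeFn_smul]; rfl]
  rw [← Finset.mul_sum, mul_div_assoc]

/-- `F x k` is the ultrafilter limit in `n` of `T x k n`. -/
noncomputable def F (x : Linf) (k : ℕ) : ℝ := ulim (fun n => T x k n)

lemma tendsto_F (x : Linf) (k : ℕ) :
    Tendsto (fun n => T x k n) ((Filter.hyperfilter ℕ : Ultrafilter ℕ) : Filter ℕ)
      (𝓝 (F x k)) := tendsto_ulim (T_abs_le x k)

lemma F_abs_le (x : Linf) (k : ℕ) : |F x k| ≤ ‖x‖ := ulim_abs_le (T_abs_le x k)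

lemma F_add (x y : Linf) (k : ℕ) : F (x + y) k = F x k + F y k := by
  refine ulim_eq (((tendsto_F x k).add (tendsto_F y k)).congr fun n => ?_)
  rw [T_add]

lemma F_smul (c : ℝ) (x : Linf) (k : ℕ) : F (c • x) k = c * F x k := by
  refine ulim_eq (((tendsto_F x k).const_mul c).congr fun n => ?_)
  rw [T_smul]

/-- The functional: ultrafilter limit in `k` of `F x k`. -/
noncomputable def Lfun (x : Linf) : ℝ := ulim (F x)

lemma tendsto_Lfun (x : Linf) :
    Tendsto (F x) ((Filter.hyperfilter ℕ : Ultrafilter ℕ) : Filter ℕ) (𝓝 (Lfun x)) :=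
  tendsto_ulim (F_abs_le x)

lemma Lfun_abs_le (x : Linf) : |Lfun x| ≤ ‖x‖ := ulim_abs_le (F_abs_le x)

lemma Lfun_add (x y : Linf) : Lfun (x + y) = Lfun x + Lfun y := by
  refine ulim_eq (((tendsto_Lfun x).add (tendsto_Lfun y)).congr fun k => ?_)
  rw [F_add]

lemma Lfun_smul (c : ℝ) (x : Linf) : Lfun (c • x) = c * Lfun x := by
  refine ulim_eq (((tendsto_Lfun x).const_mul c).congr fun k => ?_)
  rw [F_smul]

/-- The functional as a continuous linear map. -/
noncomputable def Lmap : StrongDual ℝ Linf :=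
  LinearMap.mkContinuous
    ({ toFun := Lfun
       map_add' := Lfun_add
       map_smul' := fun c x => by simpa using Lfun_smul c x } : Linf →ₗ[ℝ] ℝ) 1
    (fun x => by rw [one_mul, Real.norm_eq_abs]; exact Lfun_abs_le x)

lemma Lmap_apply (x : Linf) : Lmap x = Lfun x := rfl

/-! ### Positivity and the constant sequence -/

lemma iter_nonneg (j : ℕ) : ∀ x : Linf, (∀ n, 0 ≤ x n) → ∀ n, 0 ≤ (cesaro^[j] x) n := by
  induction j with
  | zero => intro x hx n; rw [Function.iterate_zero_apply]; exact hx n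
  | succ j ih =>
      intro x hx n
      rw [Function.iterate_succ_apply]
      refine ih (cesaro x) (fun m => ?_) n
      rw [cesaro_apply]
      exact div_nonneg (Finset.sum_nonneg fun i _ => hx i) (by positivity)

lemma Lfun_nonneg {x : Linf} (hx : ∀ n, 0 ≤ x n) : 0 ≤ Lfun x := by
  refine ulim_nonneg (F_abs_le x) fun k => ?_
  refine ulim_nonneg (T_abs_le x k) fun n => ?_
  unfold T
  exact div_nonneg (Finset.sum_nonneg fun j _ => iter_nonneg j x hx n) (by positivity)

lemma cesaro_ones : cesaro onesSeq = onesSeq := by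
  apply lp.ext; funext n
  show cesaro onesSeq n = onesSeq n
  rw [cesaro_apply, onesSeq_apply]
  rw [Finset.sum_congr rfl (fun i _ => (onesSeq_apply i : onesSeq i = 1)),
    Finset.sum_const, Finset.card_range, nsmul_eq_mul, mul_one]
  push_cast
  exact div_self (by positivity)

lemma iter_ones (j : ℕ) : cesaro^[j] onesSeq = onesSeq := by
  induction j with
  | zero => rw [Function.iterate_zero_apply]
  | succ j ih => rw [Function.iterate_succ_apply, cesaro_ones, ih]

lemma Lfun_ones : Lfun onesSeq = 1 := by
  have hT : ∀ k n, T onesSeq k n = 1 := by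
    intro k n
    unfold T
    have h1 : ∀ j ∈ Finset.range (k + 1), (cesaro^[j] onesSeq) n = (1:ℝ) := by
      intro j _; rw [iter_ones j]; exact onesSeq_apply n
    rw [Finset.sum_congr rfl h1, Finset.sum_const, Finset.card_range, nsmul_eq_mul, mul_one]
    push_cast
    exact div_self (by positivity)
  have hF : ∀ k, F onesSeq k = 1 := fun k =>
    ulim_eq (tendsto_const_nhds.congr fun n => (hT k n).symm)
  exact ulim_eq (tendsto_const_nhds.congr fun k => (hF k).symm)

/-! ### Sequences tending to zero -/

lemma tendsto_div_natSucc (c : ℝ) :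
    Tendsto (fun k : ℕ => c / ((k : ℝ) + 1)) atTop (𝓝 0) := by
  have h := (tendsto_const_div_atTop_nhds_zero_nat c).comp (tendsto_add_atTop_nat 1)
  refine h.congr fun k => ?_
  show c / ((k + 1 : ℕ) : ℝ) = c / ((k : ℝ) + 1)
  push_cast; ring_nf

lemma cesaro_tendsto_zero {z : Linf} (h : Tendsto (fun n => z n) atTop (𝓝 (0:ℝ))) :
    Tendsto (fun n => cesaro z n) atTop (𝓝 0) := by
  have h2 := h.cesaro.comp (tendsto_add_atTop_nat 1)
  refine h2.congr fun n => ?_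
  show ((n + 1 : ℕ) : ℝ)⁻¹ * ∑ i ∈ Finset.range (n + 1), z i = cesaro z n
  rw [cesaro_apply, div_eq_inv_mul]
  push_cast; ring_nf

lemma iter_tendsto_zero {z : Linf} (h : Tendsto (fun n => z n) atTop (𝓝 (0:ℝ))) (j : ℕ) :
    Tendsto (fun n => (cesaro^[j] z) n) atTop (𝓝 0) := by
  induction j generalizing z with
  | zero => simpa only [Function.iterate_zero_apply] using h
  | succ j ih =>
      simp only [Function.iterate_succ_apply]
      exact ih (cesaro_tendsto_zero h)

/-! ### Shift invariance -/

lemma Lfun_shift_sub (x : Linf) : Lfun (shiftSeq x - x) = 0 := by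
  set y : Linf := shiftSeq x - x with hy
  have hyApp : ∀ i, y i = x (i + 1) - x i := by
    intro i
    rw [hy, lp.coeFn_sub]
    rfl
  have hces : ∀ n, cesaro y n = (x (n + 1) - x 0) / ((n : ℝ) + 1) := by
    intro n
    rw [cesaro_apply]
    congr 1
    rw [Finset.sum_congr rfl fun i _ => hyApp i]
    exact Finset.sum_range_sub (fun i => x i) (n + 1)
  have hc0 : Tendsto (fun n => cesaro y n) atTop (𝓝 0) := by
    refine squeeze_zero_norm (a := fun n : ℕ => 2 * ‖x‖ / ((n : ℝ) + 1)) (fun n => ?_)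
      (tendsto_div_natSucc (2 * ‖x‖))
    · rw [hces, Real.norm_eq_abs, abs_div, abs_of_pos (by positivity : (0:ℝ) < (n : ℝ) + 1)]
      have hnum : |x (n + 1) - x 0| ≤ 2 * ‖x‖ := by
        calc |x (n + 1) - x 0| ≤ |x (n + 1)| + |x 0| := abs_sub _ _
          _ ≤ ‖x‖ + ‖x‖ := add_le_add (entry_abs_le x _) (entry_abs_le x 0)
          _ = 2 * ‖x‖ := by ring
      show |x (n + 1) - x 0| / ((n : ℝ) + 1) ≤ 2 * ‖x‖ / ((n : ℝ) + 1)
      gcongr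
  set a : ℝ := ulim (fun n => y n) with ha
  have hya : Tendsto (fun n => y n)
      ((Filter.hyperfilter ℕ : Ultrafilter ℕ) : Filter ℕ) (𝓝 a) :=
    tendsto_ulim (fun n => entry_abs_le y n)
  have hFk : ∀ k, F y k = a / ((k : ℝ) + 1) := by
    intro k
    apply ulim_eq
    have hsum : Tendsto (fun n => ∑ j ∈ Finset.range (k + 1), (cesaro^[j] y) n)
        ((Filter.hyperfilter ℕ : Ultrafilter ℕ) : Filter ℕ)
        (𝓝 (∑ j ∈ Finset.range (k + 1), if j = 0 then a else 0)) := by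
      apply tendsto_finset_sum
      intro j _
      rcases Nat.eq_zero_or_pos j with rfl | hjpos
      · simpa only [Function.iterate_zero_apply, if_pos rfl, if_true] using hya
      · obtain ⟨m, rfl⟩ := Nat.exists_eq_succ_of_ne_zero hjpos.ne'
        simp only [if_neg (Nat.succ_ne_zero m), Function.iterate_succ_apply]
        exact (iter_tendsto_zero hc0 m).mono_left Nat.hyperfilter_le_atTop
    have hsval : (∑ j ∈ Finset.range (k + 1), if j = 0 then a else 0) = a := by
      rw [Finset.sum_ite_eq' (Finset.range (k + 1)) 0 (fun _ => a),
        if_pos (Finset.mem_range.2 (Nat.succ_pos k))]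
    rw [hsval] at hsum
    exact (hsum.div_const ((k : ℝ) + 1)).congr fun n => rfl
  have hF0 : Tendsto (F y) atTop (𝓝 0) :=
    (tendsto_div_natSucc a).congr fun k => (hFk k).symm
  exact ulim_eq_of_atTop hF0

/-! ### Cesàro invariance -/

lemma Lfun_cesaro_sub (x : Linf) : Lfun (cesaro x - x) = 0 := by
  set z : Linf := cesaro x - x with hz
  have hzIter : ∀ j n, (cesaro^[j] z) n = (cesaro^[j + 1] x) n - (cesaro^[j] x) n := by
    intro j n
    rw [hz, iter_sub, lp.coeFn_sub, Pi.sub_apply, ← Function.iterate_succ_apply]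
  have hT : ∀ k n, T z k n = ((cesaro^[k + 1] x) n - x n) / ((k : ℝ) + 1) := by
    intro k n
    unfold T
    congr 1
    rw [Finset.sum_congr rfl fun j _ => hzIter j n]
    have := Finset.sum_range_sub (fun j => (cesaro^[j] x) n) (k + 1)
    rw [this, Function.iterate_zero_apply]
  have hTb : ∀ k n, |T z k n| ≤ 2 * ‖x‖ / ((k : ℝ) + 1) := by
    intro k n
    rw [hT, abs_div, abs_of_pos (by positivity : (0:ℝ) < (k : ℝ) + 1)]
    have hnum : |(cesaro^[k + 1] x) n - x n| ≤ 2 * ‖x‖ := by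
      calc |(cesaro^[k + 1] x) n - x n| ≤ |(cesaro^[k + 1] x) n| + |x n| := abs_sub _ _
        _ ≤ ‖x‖ + ‖x‖ := add_le_add (iter_abs_le x _ n) (entry_abs_le x n)
        _ = 2 * ‖x‖ := by ring
    gcongr
  have hFb : ∀ k, |F z k| ≤ 2 * ‖x‖ / ((k : ℝ) + 1) := fun k => ulim_abs_le (hTb k)
  have hF0 : Tendsto (F z) atTop (𝓝 0) :=
    squeeze_zero_norm (fun k => by rw [Real.norm_eq_abs]; exact hFb k)
      (tendsto_div_natSucc (2 * ‖x‖))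
  exact ulim_eq_of_atTop hF0


end CB

/-- There exists a Banach limit invariant under the Cesàro operator. -/
theorem exists_cesaro_invariant_banachLimit :
    ∃ L : StrongDual ℝ Linf, IsBanachLimit L ∧
      ∀ x : Linf, L (cesaro x) = L x := by
  refine ⟨CB.Lmap, ⟨fun x hx => CB.Lfun_nonneg hx, fun x => ?_, CB.Lfun_ones⟩, fun x => ?_⟩
  · have h : CB.Lmap (shiftSeq x) - CB.Lmap x = 0 := by
      rw [← map_sub]
      exact CB.Lfun_shift_sub x
    exact sub_eq_zero.mp h
  · have h : CB.Lmap (cesaro x) - CB.Lmap x = 0 := by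
      rw [← map_sub]
      exact CB.Lfun_cesaro_sub x
    exact sub_eq_zero.mp h
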